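/- Let H be a complex Hilbert space, let K(H) be the C*-algebra of compact operators on H, and let W be a Hilbert C*-module over K(H) whose orthogonal dimension satisfies dim_{K(H)} W ≤ dim H. Let {ξ_i : i ∈ I} be an orthonormal basis for H. Then there exists a subset J ⊆ I and an orthonormal basis {w_i : i ∈ J} for W such that ⟨w_i, w_i⟩ = ξ_i ⊗ ξ_i for all i ∈ J. -/

import Mathlib

open Metric ContinuousLinearMap in
/-- **Schauder's theorem** for Hilbert space: the adjoint of a compact operator is compact. -/
theorem IsCompactOperator.star_clm {H : Type*} [NormedAddCommGroup H] [InnerProductSpace ℂ H]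
    [CompleteSpace H] {f : H →L[ℂ] H} (hf : IsCompactOperator f) :
    IsCompactOperator ⇑(star f) := by
  have hA : IsCompactOperator ⇑(f ∘L (star f)) := by
    exact hf.comp_clm (star f)
  have goal_iff := isCompactOperator_iff_isCompact_closure_image_closedBall
    ((star f : H →L[ℂ] H) : H →ₗ[ℂ] H) zero_lt_one
  refine goal_iff.mpr (TotallyBounded.isCompact_of_isClosed ?_ isClosed_closure)
  refine TotallyBounded.closure ?_
  rw [Metric.totallyBounded_iff]
  intro ε hε
  set A := f ∘L (star f) with hAdef
  have hAtb : TotallyBounded (⇑A '' closedBall 0 1) := by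
    have h1 := (isCompactOperator_iff_isCompact_closure_image_closedBall
      ((A : H →L[ℂ] H) : H →ₗ[ℂ] H) zero_lt_one).mp hA
    exact h1.totallyBounded.subset subset_closure
  obtain ⟨t, htsub, htfin, hcov⟩ := totallyBounded_iff_subset.mp hAtb
      {p : H × H | dist p.1 p.2 < ε ^ 2 / 8} (Metric.dist_mem_uniformity (by positivity))
  -- choose preimages of the centers
  have hchoice : ∀ y ∈ t, ∃ u ∈ closedBall (0 : H) 1, A u = y := fun y hy => by
    obtain ⟨u, hu, hu'⟩ := htsub hy
    exact ⟨u, hu, hu'⟩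
  classical
  choose u hu hAu using hchoice
  refine ⟨(fun y => if hy : y ∈ t then star f (u y hy) else 0) '' t, htfin.image _, ?_⟩
  rintro w ⟨x, hx, rfl⟩
  obtain ⟨y, hy, hdy⟩ : ∃ y ∈ t, dist (A x) y < ε ^ 2 / 8 := by
    have := hcov ⟨x, hx, rfl⟩
    simp only [Set.mem_iUnion, Set.mem_setOf_eq] at this
    obtain ⟨y, hy, hd⟩ := this
    exact ⟨y, hy, hd⟩
  simp only [Set.mem_iUnion, mem_ball]
  refine ⟨star f (u y hy), ⟨y, hy, by simp [hy]⟩, ?_⟩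
  -- estimate
  set z := x - u y hy with hz
  have hznorm : ‖z‖ ≤ 2 := by
    have h1 : ‖x‖ ≤ 1 := by simpa using hx
    have h2 : ‖u y hy‖ ≤ 1 := by simpa using hu y hy
    calc ‖z‖ ≤ ‖x‖ + ‖u y hy‖ := norm_sub_le _ _
    _ ≤ 2 := by linarith
  have hAz : ‖A z‖ < ε ^ 2 / 8 := by
    have : A z = A x - y := by rw [hz, map_sub, hAu y hy]
    rw [this, ← dist_eq_norm]
    exact hdy
  have hkey : ‖star f z‖ ^ 2 ≤ ‖z‖ * ‖A z‖ := by
    have h1 : ‖star f z‖ ^ 2 = RCLike.re (inner ℂ (star f z) (star f z)) :=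
      norm_sq_eq_re_inner (𝕜 := ℂ) _
    have h2 : inner ℂ (star f z) (star f z) = inner ℂ z (A z) := by
      rw [star_eq_adjoint]
      rw [adjoint_inner_left]
      rfl
    have h3 : RCLike.re (inner ℂ z (A z)) ≤ ‖inner ℂ z (A z)‖ := RCLike.re_le_norm _
    have h4 : ‖inner ℂ z (A z)‖ ≤ ‖z‖ * ‖A z‖ := norm_inner_le_norm _ _
    rw [h1, h2]
    exact h3.trans h4
  have hfz : ‖star f z‖ ^ 2 < ε ^ 2 / 4 := by
    have hAz0 : 0 ≤ ‖A z‖ := norm_nonneg _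
    nlinarith [hkey, hznorm, hAz, norm_nonneg z]
  have : dist (star f x) (star f (u y hy)) = ‖star f z‖ := by
    rw [dist_eq_norm, ← map_sub, hz]
  show dist ((star f) x) ((star f) (u y hy)) < ε
  rw [this]
  nlinarith [norm_nonneg ((star f) z), hfz, hε]

noncomputable section

variable (H : Type*) [NormedAddCommGroup H] [InnerProductSpace ℂ H] [CompleteSpace H]

/-- The compact operators on the Hilbert space `H`, as a non-unital star subalgebra
of `H →L[ℂ] H`. -/
def compactStarAlgebra : NonUnitalStarSubalgebra ℂ (H →L[ℂ] H) where
  carrier := {T : H →L[ℂ] H | IsCompactOperator T}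
  add_mem' hf hg := hf.add hg
  zero_mem' := isCompactOperator_zero
  smul_mem' c _ hf := hf.smul c
  mul_mem' {f g} hf _ := by simpa [Function.comp_def] using hf.comp_clm g
  star_mem' {f} hf := hf.star_clm

/-- `K(H)`, the C*-algebra of compact operators on the Hilbert space `H`. -/
abbrev KH := ↥(compactStarAlgebra H)

instance : CStarRing (KH H) where
  norm_mul_self_le x := by simpa using CStarRing.norm_mul_self_le (x : H →L[ℂ] H)

instance : CompleteSpace (KH H) :=
  (isClosed_setOfPred_isCompactOperator (σ₁₂ := RingHom.id ℂ) (M₁ := H) (M₂ := H)).completeSpace_coe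

variable {H}

/-- The rank one operator `ξ ⊗ η : ν ↦ (ν, η)ξ` (inner product linear in the first slot,
i.e. `(ν, η) = ⟪η, ν⟫` in Mathlib's convention). -/
def rankOneOp (ξ η : H) : H →L[ℂ] H := (innerSL ℂ η).smulRight ξ

set_option linter.unusedSectionVars false in
theorem isCompactOperator_rankOneOp (ξ η : H) : IsCompactOperator ⇑(rankOneOp ξ η) := by
  refine (isCompactOperator_iff_image_closedBall_subset_compact
    ((rankOneOp ξ η : H →L[ℂ] H) : H →ₗ[ℂ] H) zero_lt_one).mpr ?_
  refine ⟨(fun c : ℂ => c • ξ) '' Metric.closedBall 0 ‖η‖,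
    (isCompact_closedBall 0 ‖η‖).image (by fun_prop), ?_⟩
  rintro x ⟨ν, hν, rfl⟩
  refine ⟨inner ℂ η ν, ?_, rfl⟩
  simp only [Metric.mem_closedBall, dist_zero_right] at hν ⊢
  calc ‖inner ℂ η ν‖ ≤ ‖η‖ * ‖ν‖ := norm_inner_le_norm η ν
  _ ≤ ‖η‖ := by nlinarith [norm_nonneg (η : H)]

/-- The rank one operator `ξ ⊗ η` as an element of `K(H)`. -/
def KH.rankOne (ξ η : H) : KH H := ⟨rankOneOp ξ η, isCompactOperator_rankOneOp ξ η⟩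

/-- A Hilbert C*-module structure on `W` over a C*-algebra `A`: a right `A`-action `smul`
and an `A`-valued inner product `inner` satisfying the usual axioms, whose induced norm
`‖⟨x,x⟩‖ ^ (1/2)` coincides with the (complete) norm of `W`.  Positivity `⟨x,x⟩ ≥ 0` is
encoded through its C*-algebraic characterization `∃ b, ⟨x,x⟩ = b* ⬝ b`. -/
structure HilbertModule (A : Type*) (W : Type*)
    [NonUnitalNormedRing A] [StarRing A] [CStarRing A] [NormedSpace ℂ A]
    [IsScalarTower ℂ A A] [SMulCommClass ℂ A A] [StarModule ℂ A] [CompleteSpace A]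
    [NormedAddCommGroup W] [NormedSpace ℂ W] [CompleteSpace W] : Type _ where
  smul : W → A → W
  inner : W → W → A
  add_smul' : ∀ x y a, smul (x + y) a = smul x a + smul y a
  smul_add' : ∀ x a b, smul x (a + b) = smul x a + smul x b
  smul_assoc' : ∀ x a b, smul (smul x a) b = smul x (a * b)
  smul_complex₁ : ∀ (c : ℂ) x a, smul (c • x) a = c • smul x a
  smul_complex₂ : ∀ (c : ℂ) x a, smul x (c • a) = c • smul x a
  inner_add_left : ∀ x y z, inner (x + y) z = inner x z + inner y z
  inner_add_right : ∀ x y z, inner x (y + z) = inner x y + inner x z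
  inner_smul_right : ∀ x y a, inner x (smul y a) = inner x y * a
  inner_smul_complex : ∀ (c : ℂ) x y, inner x (c • y) = c • inner x y
  star_inner : ∀ x y, star (inner x y) = inner y x
  inner_self_nonneg : ∀ x, ∃ a, inner x x = star a * a
  inner_self_eq_zero : ∀ x, inner x x = 0 ↔ x = 0
  norm_sq_eq : ∀ x, ‖x‖ ^ 2 = ‖inner x x‖

/-- A minimal projection in an algebra `A`: a nonzero self-adjoint idempotent `e`
with `e ⬝ A ⬝ e = ℂ ⬝ e`. -/
def IsMinimalProjection {A : Type*} [NonUnitalNormedRing A] [StarRing A] [NormedSpace ℂ A]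
    (e : A) : Prop :=
  star e = e ∧ e * e = e ∧ e ≠ 0 ∧ ∀ a : A, ∃ c : ℂ, e * a * e = c • e

/-- An orthonormal basis `{w i}` of a Hilbert C*-module: each `⟨wᵢ, wᵢ⟩` is a minimal
projection, `⟨wᵢ, wⱼ⟩ = 0` for `i ≠ j`, and the submodule generated by the `wᵢ`
is dense in `W`. -/
def HilbertModule.IsOrthonormalBasis {A W : Type*}
    [NonUnitalNormedRing A] [StarRing A] [CStarRing A] [NormedSpace ℂ A]
    [IsScalarTower ℂ A A] [SMulCommClass ℂ A A] [StarModule ℂ A] [CompleteSpace A]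
    [NormedAddCommGroup W] [NormedSpace ℂ W] [CompleteSpace W]
    (M : HilbertModule A W) {ι : Type*} (w : ι → W) : Prop :=
  (∀ i, IsMinimalProjection (M.inner (w i) (w i))) ∧
  (∀ i j, i ≠ j → M.inner (w i) (w j) = 0) ∧
  closure (↑(Submodule.span ℂ
      (Set.range w ∪ {x | ∃ (i : ι) (a : A), M.smul (w i) a = x})) : Set W) = Set.univ

section RankOneAux
variable {H : Type*} [NormedAddCommGroup H] [InnerProductSpace ℂ H] [CompleteSpace H]

set_option linter.unusedSectionVars false

lemma rankOneOp_apply (ξ η ν : H) : rankOneOp ξ η ν = (inner ℂ η ν : ℂ) • ξ := rfl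

lemma KH.rankOne_coe (ξ η : H) : ((KH.rankOne ξ η : KH H) : H →L[ℂ] H) = rankOneOp ξ η := rfl

lemma KH.rankOne_mul (a b c d : H) :
    KH.rankOne a b * KH.rankOne c d = (inner ℂ b c : ℂ) • (KH.rankOne a d : KH H) := by
  apply Subtype.ext
  apply ContinuousLinearMap.ext
  intro ν
  show rankOneOp a b (rankOneOp c d ν) = (inner ℂ b c : ℂ) • rankOneOp a d ν
  simp [rankOneOp_apply, inner_smul_right, smul_smul, mul_comm]

lemma KH.rankOne_star (a b : H) : star (KH.rankOne a b) = KH.rankOne b a := by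
  apply Subtype.ext
  show star (rankOneOp a b) = rankOneOp b a
  rw [ContinuousLinearMap.star_eq_adjoint]
  symm
  rw [ContinuousLinearMap.eq_adjoint_iff]
  intro x y
  simp [rankOneOp_apply, inner_smul_left, inner_smul_right]
  ring
end RankOneAux
section MinProjAux
variable {H : Type*} [NormedAddCommGroup H] [InnerProductSpace ℂ H] [CompleteSpace H]

set_option linter.unusedSectionVars false

lemma KH.isMinimalProjection_rankOne {η : H} (hη : ‖η‖ = 1) :
    IsMinimalProjection (KH.rankOne η η) := by
  have hin : (inner ℂ η η : ℂ) = 1 := by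
    rw [inner_self_eq_norm_sq_to_K, hη]; norm_num
  refine ⟨KH.rankOne_star η η, by rw [KH.rankOne_mul, hin, one_smul], ?_, ?_⟩
  · intro h
    have h2 : rankOneOp η η η = 0 := by
      have := congrArg (fun T : KH H => (T : H →L[ℂ] H) η) h
      exact this
    rw [rankOneOp_apply, hin, one_smul] at h2
    rw [h2] at hη; simp at hη
  · intro a
    refine ⟨inner ℂ η ((a : H →L[ℂ] H) η), ?_⟩
    apply Subtype.ext
    apply ContinuousLinearMap.ext
    intro ν
    show rankOneOp η η ((a : H →L[ℂ] H) (rankOneOp η η ν)) =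
      (inner ℂ η ((a : H →L[ℂ] H) η) : ℂ) • rankOneOp η η ν
    simp [rankOneOp_apply, map_smul, inner_smul_right, smul_smul, mul_comm]

lemma KH.exists_unit_of_isMinimalProjection {p : KH H} (hp : IsMinimalProjection p) :
    ∃ η : H, ‖η‖ = 1 ∧ p = KH.rankOne η η := by
  obtain ⟨hstar, hidem, hne, hmin⟩ := hp
  have hPidem : ∀ x, (p : H →L[ℂ] H) ((p : H →L[ℂ] H) x) = (p : H →L[ℂ] H) x := fun x =>
    congrArg (fun T : KH H => (T : H →L[ℂ] H) x) hidem
  have hA : ContinuousLinearMap.adjoint (p : H →L[ℂ] H) = (p : H →L[ℂ] H) :=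
    congrArg (fun T : KH H => (T : H →L[ℂ] H)) hstar
  have hPadj : ∀ x y : H,
      (inner ℂ ((p : H →L[ℂ] H) x) y : ℂ) = inner ℂ x ((p : H →L[ℂ] H) y) := by
    intro x y
    calc (inner ℂ ((p : H →L[ℂ] H) x) y : ℂ)
        = inner ℂ ((ContinuousLinearMap.adjoint (p : H →L[ℂ] H)) x) y := by rw [hA]
      _ = inner ℂ x ((p : H →L[ℂ] H) y) := ContinuousLinearMap.adjoint_inner_left _ _ _
  obtain ⟨ν, hν⟩ : ∃ ν, (p : H →L[ℂ] H) ν ≠ 0 := by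
    by_contra h
    push_neg at h
    exact hne (Subtype.ext (ContinuousLinearMap.ext fun x => h x))
  have hn0 : ‖(p : H →L[ℂ] H) ν‖ ≠ 0 := norm_ne_zero_iff.mpr hν
  have hcn : ((‖(p : H →L[ℂ] H) ν‖ : ℂ)) ≠ 0 := by exact_mod_cast hn0
  refine ⟨(‖(p : H →L[ℂ] H) ν‖ : ℂ)⁻¹ • (p : H →L[ℂ] H) ν, ?_, ?_⟩
  · rw [norm_smul]; simp [hn0]
  have hηnorm : ‖(‖(p : H →L[ℂ] H) ν‖ : ℂ)⁻¹ • (p : H →L[ℂ] H) ν‖ = 1 := by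
    rw [norm_smul]; simp [hn0]
  have hPη : (p : H →L[ℂ] H) ((‖(p : H →L[ℂ] H) ν‖ : ℂ)⁻¹ • (p : H →L[ℂ] H) ν)
      = (‖(p : H →L[ℂ] H) ν‖ : ℂ)⁻¹ • (p : H →L[ℂ] H) ν := by
    rw [map_smul, hPidem]
  apply Subtype.ext
  apply ContinuousLinearMap.ext
  intro μ
  show (p : H →L[ℂ] H) μ = rankOneOp _ _ μ
  rw [rankOneOp_apply]
  -- first: P μ is a scalar multiple of P ν
  obtain ⟨c, hc⟩ := hmin (KH.rankOne ((p : H →L[ℂ] H) μ) ν)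
  have hc' : (p : H →L[ℂ] H) (rankOneOp ((p : H →L[ℂ] H) μ) ν
      ((p : H →L[ℂ] H) ((p : H →L[ℂ] H) ν))) = c • (p : H →L[ℂ] H) ((p : H →L[ℂ] H) ν) :=
    congrArg (fun T : KH H => (T : H →L[ℂ] H) ((p : H →L[ℂ] H) ν)) hc
  have hinner : (inner ℂ ν ((p : H →L[ℂ] H) ν) : ℂ) = (‖(p : H →L[ℂ] H) ν‖ : ℂ) ^ 2 := by
    have h1 : (inner ℂ ((p : H →L[ℂ] H) ν) ((p : H →L[ℂ] H) ν) : ℂ)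
        = inner ℂ ν ((p : H →L[ℂ] H) ((p : H →L[ℂ] H) ν)) := hPadj ν _
    rw [hPidem] at h1
    rw [← h1]
    exact inner_self_eq_norm_sq_to_K (𝕜 := ℂ) (E := H) _
  rw [hPidem, rankOneOp_apply, map_smul, hPidem, hinner] at hc'
  have hn2 : ((‖(p : H →L[ℂ] H) ν‖ : ℂ)) ^ 2 ≠ 0 := pow_ne_zero 2 hcn
  obtain ⟨d, hd⟩ : ∃ d : ℂ,
      (p : H →L[ℂ] H) μ = d • ((‖(p : H →L[ℂ] H) ν‖ : ℂ)⁻¹ • (p : H →L[ℂ] H) ν) := by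
    refine ⟨((‖(p : H →L[ℂ] H) ν‖ : ℂ) ^ 2)⁻¹ * c * (‖(p : H →L[ℂ] H) ν‖ : ℂ), ?_⟩
    have := congrArg (fun x => ((‖(p : H →L[ℂ] H) ν‖ : ℂ) ^ 2)⁻¹ • x) hc'
    simp only [smul_smul, inv_mul_cancel₀ hn2, one_smul] at this
    rw [this, smul_smul]
    congr 1
    field_simp
  have hd2 : (inner ℂ ((‖(p : H →L[ℂ] H) ν‖ : ℂ)⁻¹ • (p : H →L[ℂ] H) ν)
      ((p : H →L[ℂ] H) μ) : ℂ) = d := by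
    rw [hd, inner_smul_right]
    rw [show (inner ℂ ((‖(p : H →L[ℂ] H) ν‖ : ℂ)⁻¹ • (p : H →L[ℂ] H) ν)
      ((‖(p : H →L[ℂ] H) ν‖ : ℂ)⁻¹ • (p : H →L[ℂ] H) ν) : ℂ) = 1 by
        rw [inner_self_eq_norm_sq_to_K, hηnorm]; norm_num]
    ring
  have hd3 : (inner ℂ ((‖(p : H →L[ℂ] H) ν‖ : ℂ)⁻¹ • (p : H →L[ℂ] H) ν)
      ((p : H →L[ℂ] H) μ) : ℂ)
      = inner ℂ ((‖(p : H →L[ℂ] H) ν‖ : ℂ)⁻¹ • (p : H →L[ℂ] H) ν) μ := by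
    rw [← hPadj, hPη]
  rw [hd, ← hd2, hd3]
end MinProjAux
section ModuleAux
variable {A W : Type*}
  [NonUnitalNormedRing A] [StarRing A] [CStarRing A] [NormedSpace ℂ A]
  [IsScalarTower ℂ A A] [SMulCommClass ℂ A A] [StarModule ℂ A] [CompleteSpace A]
  [NormedAddCommGroup W] [NormedSpace ℂ W] [CompleteSpace W]
  (M : HilbertModule A W)

set_option linter.unusedSectionVars false

lemma HilbertModule.inner_smul_left' (x y : W) (a : A) :
    M.inner (M.smul x a) y = star a * M.inner x y := by
  rw [← M.star_inner, M.inner_smul_right, star_mul, M.star_inner]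

lemma HilbertModule.inner_sub_left' (x y z : W) :
    M.inner (x - y) z = M.inner x z - M.inner y z := by
  have h := M.inner_add_left (x - y) y z
  rw [sub_add_cancel] at h
  rw [eq_sub_of_add_eq h.symm]

lemma HilbertModule.inner_sub_right' (x y z : W) :
    M.inner x (y - z) = M.inner x y - M.inner x z := by
  have h := M.inner_add_right x (y - z) z
  rw [sub_add_cancel] at h
  rw [eq_sub_of_add_eq h.symm]

lemma HilbertModule.smul_sub' (x : W) (a b : A) :
    M.smul x (a - b) = M.smul x a - M.smul x b := by
  have h := M.smul_add' x (a - b) b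
  rw [sub_add_cancel] at h
  rw [eq_sub_of_add_eq h.symm]

/-- `x · p = x` when `⟨x, x⟩ = p` is a self-adjoint idempotent. -/
lemma HilbertModule.smul_inner_self (x : W) (hs : star (M.inner x x) = M.inner x x)
    (hi : M.inner x x * M.inner x x = M.inner x x) :
    M.smul x (M.inner x x) = x := by
  have h : M.inner (M.smul x (M.inner x x) - x) (M.smul x (M.inner x x) - x) = 0 := by
    simp only [M.inner_sub_left', M.inner_sub_right', M.inner_smul_right,
      M.inner_smul_left', hs]
    simp only [← mul_assoc, hi]
    abel
  have := (M.inner_self_eq_zero _).mp h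
  rwa [sub_eq_zero] at this

/-- `x · a = x · b` when `⟨x,x⟩ · a = ⟨x,x⟩ · b`. -/
lemma HilbertModule.smul_eq_smul_of_inner_mul (x : W) (a b : A)
    (h : M.inner x x * a = M.inner x x * b) :
    M.smul x a = M.smul x b := by
  have h0 : M.inner (M.smul x (a - b)) (M.smul x (a - b)) = 0 := by
    rw [M.inner_smul_left', M.inner_smul_right, mul_sub, h, sub_self, mul_zero]
  have := (M.inner_self_eq_zero _).mp h0
  rw [M.smul_sub', sub_eq_zero] at this
  exact this
end ModuleAux

set_option maxHeartbeats 1000000 in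
/-- Lemma 4.1, for `A = K(H)`.
Let `W` be a Hilbert C*-module over `K(H)` with `dim_{K(H)} W ≤ dim H` (encoded as: `W`
has an orthonormal basis indexed by a subset of `I`), and let `{ξ i : i ∈ I}` be an
orthonormal (Hilbert) basis of `H`.  Then there are `J ⊆ I` and an orthonormal basis
`{w i : i ∈ J}` of `W` with `⟨w i, w i⟩ = ξ i ⊗ ξ i` for all `i ∈ J`. -/
theorem exists_orthonormal_basis_with_rankOne_inner
    {H : Type*} [NormedAddCommGroup H] [InnerProductSpace ℂ H] [CompleteSpace H]
    {W : Type*} [NormedAddCommGroup W] [NormedSpace ℂ W] [CompleteSpace W]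
    (M : HilbertModule (KH H) W)
    {I : Type*} (ξ : HilbertBasis I ℂ H)
    (hdim : ∃ (J' : Set I) (w : J' → W), M.IsOrthonormalBasis w) :
    ∃ (J : Set I) (w : J → W), M.IsOrthonormalBasis w ∧
      ∀ i : J, M.inner (w i) (w i) = KH.rankOne (ξ i) (ξ i) := by
  obtain ⟨J, w, hmin, horth, hdense⟩ := hdim
  choose η hη hp using fun j => KH.exists_unit_of_isMinimalProjection (hmin j)
  have hξnorm : ∀ i : J, ‖ξ (i : I)‖ = 1 := fun i => ξ.orthonormal.1 _
  have hinη : ∀ j : J, (inner ℂ (η j) (η j) : ℂ) = 1 := fun j => by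
    rw [inner_self_eq_norm_sq_to_K, hη j]; norm_num
  have hinξ : ∀ j : J, (inner ℂ (ξ (j : I)) (ξ (j : I)) : ℂ) = 1 := fun j => by
    rw [inner_self_eq_norm_sq_to_K, hξnorm j]; norm_num
  set v : J → KH H := fun j => KH.rankOne (η j) (ξ (j : I)) with hv
  set w' : J → W := fun j => M.smul (w j) (v j) with hw'
  have hvv : ∀ j : J, v j * star (v j) = M.inner (w j) (w j) := fun j => by
    rw [hv, KH.rankOne_star, KH.rankOne_mul, hinξ j, one_smul, hp j]
  have hprod : ∀ i j : J, M.inner (w' i) (w' j)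
      = star (v i) * (M.inner (w i) (w j) * v j) := fun i j => by
    rw [hw', M.inner_smul_left', M.inner_smul_right]
  have hii : ∀ j : J, M.inner (w' j) (w' j) = KH.rankOne (ξ (j : I)) (ξ (j : I)) := fun j => by
    rw [hprod, hp j, hv, KH.rankOne_mul, hinη j, one_smul, KH.rankOne_star,
      KH.rankOne_mul, hinη j, one_smul]
  have hwp : ∀ j : J, M.smul (w j) (M.inner (w j) (w j)) = w j := fun j =>
    M.smul_inner_self (w j) (hmin j).1 (hmin j).2.1
  have hgen1 : ∀ j : J, w j = M.smul (w' j) (star (v j)) := fun j => by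
    rw [hw', M.smul_assoc', hvv j, hwp j]
  have hgen2 : ∀ (j : J) (a : KH H), M.smul (w j) a = M.smul (w' j) (star (v j) * a) := by
    intro j a
    rw [hw', M.smul_assoc', ← mul_assoc, hvv j]
    exact M.smul_eq_smul_of_inner_mul (w j) a (M.inner (w j) (w j) * a)
      (by rw [← mul_assoc, (hmin j).2.1])
  refine ⟨J, w', ⟨?_, ?_, ?_⟩, fun j => hii j⟩
  · intro j
    rw [hii j]
    exact KH.isMinimalProjection_rankOne (hξnorm j)
  · intro i j hij
    rw [hprod, horth i j hij, zero_mul, mul_zero]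
  · have hsub : (Set.range w ∪ {x | ∃ (i : J) (a : KH H), M.smul (w i) a = x})
        ⊆ (Set.range w' ∪ {x | ∃ (i : J) (a : KH H), M.smul (w' i) a = x}) := by
      rintro x (⟨j, rfl⟩ | ⟨j, a, rfl⟩)
      · exact Or.inr ⟨j, star (v j), (hgen1 j).symm⟩
      · exact Or.inr ⟨j, star (v j) * a, (hgen2 j a).symm⟩
    apply Set.eq_univ_of_univ_subset
    rw [← hdense]
    exact closure_mono (SetLike.coe_subset_coe.mpr (Submodule.span_mono hsub))
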